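/- Let H ∈ ℂ^{N×M} with singular value decomposition giving H^H H = U Λ U^H where Λ = diag(λ₁²,…,λ_M²) and U is unitary. Then for any Hermitian PSD matrix T with tr(T) ≤ P, log det(I_N + (1/σ²) H T H^H) ≤ Σ_m log(1 + λ_m² p_m / σ²) where p_m = max(μ − σ²/λ_m², 0) and μ is chosen so that Σ_m p_m = P; equality holds for T = U diag(p₁,…,p_M) U^H. -/

import Mathlib

open Matrix ComplexOrder

/-- det(1 + c•(XY)) = det(1 + c•(YX)) -/
lemma det_one_add_smul_mul_comm {a b : ℕ} (c : ℝ) (X : Matrix (Fin a) (Fin b) ℂ)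
    (Y : Matrix (Fin b) (Fin a) ℂ) :
    (1 + c • (X * Y)).det = (1 + c • (Y * X)).det := by
  rw [← Matrix.smul_mul, Matrix.det_one_add_mul_comm, Matrix.mul_smul]

/-- real smul of a PSD complex matrix by a nonneg scalar is PSD -/
lemma psd_real_smul {n : ℕ} {c : ℝ} (hc : 0 ≤ c) {Q : Matrix (Fin n) (Fin n) ℂ}
    (hQ : Q.PosSemidef) : (c • Q).PosSemidef := by
  refine Matrix.PosSemidef.of_dotProduct_mulVec_nonneg ?_ ?_
  · rw [Matrix.IsHermitian, Matrix.conjTranspose_smul, star_trivial, hQ.1.eq]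
  · intro x
    have h0 := hQ.dotProduct_mulVec_nonneg x
    rw [Complex.le_def] at h0 ⊢
    have : (c • Q) *ᵥ x = c • (Q *ᵥ x) := Matrix.smul_mulVec c Q x
    rw [this]
    have h1 : dotProduct (star x) (c • (Q *ᵥ x)) = c • dotProduct (star x) (Q *ᵥ x) :=
      dotProduct_smul c _ _
    rw [h1]
    simp only [Complex.real_smul, Complex.mul_re, Complex.mul_im, Complex.ofReal_re,
      Complex.ofReal_im, Complex.zero_re, Complex.zero_im] at h0 ⊢
    constructor
    · nlinarith [h0.1]
    · rw [← h0.2]; ring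

lemma psd_diag_re_nonneg {n : ℕ} {S : Matrix (Fin n) (Fin n) ℂ} (hS : S.PosSemidef) (i : Fin n) :
    0 ≤ (S i i).re := by
  have h := hS.dotProduct_mulVec_nonneg (Pi.single i 1)
  have hd : dotProduct (star (Pi.single i 1)) (S *ᵥ (Pi.single i 1 : Fin n → ℂ)) = S i i := by
    simp [dotProduct, Matrix.mulVec, Pi.single_apply, Finset.mul_sum, mul_ite,
      Finset.sum_ite_eq, Finset.sum_ite_eq']
  rw [hd, Complex.le_def] at h
  simpa using h.1

lemma posdef_diag_re_pos {n : ℕ} {A : Matrix (Fin n) (Fin n) ℂ} (hA : A.PosDef) (i : Fin n) :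
    0 < (A i i).re := by
  have h := hA.dotProduct_mulVec_pos (x := Pi.single i 1) (by
    intro hcon
    have := congrFun hcon i
    simp [Pi.single_apply] at this)
  have hd : dotProduct (star (Pi.single i 1)) (A *ᵥ (Pi.single i 1 : Fin n → ℂ)) = A i i := by
    simp [dotProduct, Matrix.mulVec, Pi.single_apply, Finset.mul_sum, mul_ite,
      Finset.sum_ite_eq, Finset.sum_ite_eq']
  rw [hd, Complex.lt_def] at h
  simpa using h.1

/-- Hadamard's inequality for positive definite complex matrices. -/
lemma hadamard_det_le {n : ℕ} {A : Matrix (Fin n) (Fin n) ℂ} (hA : A.PosDef) :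
    A.det.re ≤ ∏ i, (A i i).re := by
  rcases Nat.eq_zero_or_pos n with hn | hn
  · subst hn; simp [Matrix.det_fin_zero]
  set d : Fin n → ℝ := fun i => (A i i).re with hd_def
  have hd : ∀ i, 0 < d i := fun i => posdef_diag_re_pos hA i
  have hsq : ∀ i, 0 < Real.sqrt (d i) := fun i => Real.sqrt_pos.mpr (hd i)
  set E : Matrix (Fin n) (Fin n) ℂ := Matrix.diagonal (fun i => ((Real.sqrt (d i))⁻¹ : ℂ))
    with hE_def
  have hEH : Eᴴ = E := by
    simp [hE_def, Matrix.diagonal_conjTranspose, Function.comp]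
  set N := E * A * E with hN_def
  have hNpsd : N.PosSemidef := by
    have := hA.posSemidef.mul_mul_conjTranspose_same E
    rwa [hEH] at this
  have hN : N.IsHermitian := hNpsd.1
  -- diagonal entries of N are 1
  have hNdiag : ∀ i, N i i = 1 := by
    intro i
    have hAii : A i i = ((d i : ℝ) : ℂ) := (hA.1.coe_re_apply_self i).symm
    have h1 : N i i = ((Real.sqrt (d i))⁻¹ : ℂ) * A i i * ((Real.sqrt (d i))⁻¹ : ℂ) := by
      rw [hN_def, hE_def, Matrix.mul_diagonal, Matrix.diagonal_mul]
    have hne : ((Real.sqrt (d i) : ℝ) : ℂ) ≠ 0 := by exact_mod_cast (hsq i).ne'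
    rw [h1, hAii, ← Real.mul_self_sqrt (hd i).le]
    push_cast
    field_simp
    rw [Real.sqrt_sq (Real.sqrt_nonneg _)]
    exact div_self (pow_ne_zero 2 hne)
  -- eigenvalues of N
  set μ : Fin n → ℝ := hN.eigenvalues with hμ_def
  have hμnn : ∀ i, 0 ≤ μ i := fun i => hNpsd.eigenvalues_nonneg i
  -- trace of N equals n
  have htrN : N.trace = (n : ℂ) := by
    rw [Matrix.trace]
    simp only [Matrix.diag_apply, hNdiag]
    simp
  have hsum : ∑ i, μ i = (n : ℝ) := by
    have hsp : (star (hN.eigenvectorUnitary : Matrix (Fin n) (Fin n) ℂ)) * N *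
        (hN.eigenvectorUnitary : Matrix (Fin n) (Fin n) ℂ) = Matrix.diagonal (RCLike.ofReal ∘ μ) := by
      have := hN.conjStarAlgAut_star_eigenvectorUnitary
      rw [Unitary.conjStarAlgAut_apply, Unitary.coe_star, star_star] at this
      exact this
    have hVV : (hN.eigenvectorUnitary : Matrix (Fin n) (Fin n) ℂ) *
        (star (hN.eigenvectorUnitary : Matrix (Fin n) (Fin n) ℂ)) = 1 :=
      Matrix.mem_unitaryGroup_iff.mp (hN.eigenvectorUnitary).2
    have h3 : (Matrix.diagonal (RCLike.ofReal ∘ μ) : Matrix (Fin n) (Fin n) ℂ).trace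
        = N.trace := by
      rw [← hsp, Matrix.trace_mul_comm, ← Matrix.mul_assoc, ← Matrix.mul_assoc, hVV, one_mul]
    rw [htrN, Matrix.trace_diagonal] at h3
    have h4 : ((∑ i, μ i : ℝ) : ℂ) = ((n:ℝ) : ℂ) := by
      push_cast
      simpa using h3
    exact_mod_cast h4
  -- det of N equals product of eigenvalues
  have hdetN : N.det.re = ∏ i, μ i := by
    rw [hN.det_eq_prod_eigenvalues]
    norm_cast
  -- AM-GM : ∏ μ ≤ 1
  have hprodμ : ∏ i, μ i ≤ 1 := by
    have hn' : (0:ℝ) < (n:ℝ) := by exact_mod_cast hn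
    have hgm := Real.geom_mean_le_arith_mean_weighted Finset.univ (fun _ => (n:ℝ)⁻¹) μ
      (fun i _ => by positivity) (by simp [Finset.card_univ]; field_simp)
      (fun i _ => hμnn i)
    rw [Real.finset_prod_rpow Finset.univ μ (fun i _ => hμnn i) _] at hgm
    have hsum2 : ∑ i, (n:ℝ)⁻¹ * μ i = 1 := by
      rw [← Finset.mul_sum, hsum]
      field_simp
    rw [hsum2] at hgm
    have hx : 0 ≤ ∏ i, μ i := Finset.prod_nonneg (fun i _ => hμnn i)
    calc ∏ i, μ i = ((∏ i, μ i) ^ ((n:ℝ)⁻¹)) ^ n :=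
          (Real.rpow_inv_natCast_pow hx hn.ne').symm
      _ ≤ 1 := pow_le_one₀ (Real.rpow_nonneg hx _) hgm
  -- relate det N and det A
  set e : ℝ := ∏ i, (Real.sqrt (d i))⁻¹ with he_def
  have hdetE : E.det = ((e : ℝ) : ℂ) := by
    rw [hE_def, Matrix.det_diagonal, he_def]
    push_cast
    rfl
  have hdetrel : N.det = ((e * e : ℝ) : ℂ) * A.det := by
    rw [hN_def, Matrix.det_mul, Matrix.det_mul, hdetE]
    push_cast
    ring
  have h5 : N.det.re = (e * e) * A.det.re := by
    rw [hdetrel, Complex.mul_re]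
    simp
  have hee : e * e = (∏ i, d i)⁻¹ := by
    rw [he_def, ← Finset.prod_mul_distrib, ← Finset.prod_inv_distrib]
    exact Finset.prod_congr rfl (fun i _ => by rw [← mul_inv, Real.mul_self_sqrt (hd i).le])
  have hfin : (∏ i, d i)⁻¹ * A.det.re ≤ 1 := by
    rw [← hee, ← h5, hdetN]
    exact hprodμ
  have hpd : (0:ℝ) < ∏ i, d i := Finset.prod_pos (fun i _ => hd i)
  calc A.det.re = (∏ i, d i) * ((∏ i, d i)⁻¹ * A.det.re) := by
        field_simp
    _ ≤ (∏ i, d i) * 1 := mul_le_mul_of_nonneg_left hfin hpd.le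
    _ = ∏ i, d i := mul_one _

lemma kkt_term (σ2 μ lam q pm : ℝ) (hσ : 0 < σ2) (hμ : 0 < μ) (hlam : 0 ≤ lam) (hq : 0 ≤ q)
    (hpm : pm = if lam = 0 then 0 else max (μ - σ2 / lam) 0) :
    Real.log (1 + lam * q / σ2) ≤ Real.log (1 + lam * pm / σ2) + (q - pm) / μ := by
  rcases eq_or_lt_of_le hlam with h0 | hl
  · rw [hpm, if_pos h0.symm, ← h0]
    simp only [zero_mul, zero_div, add_zero, Real.log_one, sub_zero]
    positivity
  · have hlam0 : lam ≠ 0 := hl.ne'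
    rw [hpm, if_neg hlam0]
    by_cases hcase : μ - σ2 / lam ≤ 0
    · rw [max_eq_right hcase]
      simp only [mul_zero, zero_div, add_zero, Real.log_one, sub_zero, zero_add]
      have h1 : (0:ℝ) < 1 + lam * q / σ2 := by positivity
      have h2 : Real.log (1 + lam * q / σ2) ≤ lam * q / σ2 := by
        have := Real.log_le_sub_one_of_pos h1
        linarith
      have hμσ : μ * lam ≤ σ2 := by
        rw [← le_div_iff₀ hl]
        linarith
      have h3 : lam * q / σ2 ≤ q / μ := by
        rw [div_le_div_iff₀ hσ hμ]
        nlinarith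
      linarith
    · push_neg at hcase
      rw [max_eq_left hcase.le]
      set pm' : ℝ := μ - σ2 / lam with hpm'
      have hkey : lam * pm' = lam * μ - σ2 := by
        rw [hpm', mul_sub, mul_comm lam (σ2 / lam), div_mul_cancel₀ σ2 hlam0]
      have hb : 1 + lam * pm' / σ2 = lam * μ / σ2 := by
        rw [hkey]
        field_simp
        ring
      have hx : (0:ℝ) < (σ2 + lam * q) / (lam * μ) := by positivity
      have hlog := Real.log_le_sub_one_of_pos hx
      have hLHS : Real.log (1 + lam * q / σ2)
          = Real.log ((σ2 + lam * q) / (lam * μ)) + Real.log (lam * μ / σ2) := by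
        rw [← Real.log_mul (by positivity) (by positivity)]
        congr 1
        field_simp
      rw [hLHS, hb]
      have heq : (σ2 + lam * q) / (lam * μ) - 1 = (q - pm') / μ := by
        rw [hpm']
        field_simp
        ring
      linarith

/-- Water-filling optimality for MIMO capacity. Here `lam m` stands for λ_m². -/
theorem stmt3 (N M : ℕ) (σ2 P μ : ℝ) (hσ : 0 < σ2) (hP : 0 < P)
    (H : Matrix (Fin N) (Fin M) ℂ) (U : Matrix (Fin M) (Fin M) ℂ)
    (hU : U ∈ Matrix.unitaryGroup (Fin M) ℂ)
    (lam : Fin M → ℝ) (hlam : ∀ m, 0 ≤ lam m)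
    (hH : Hᴴ * H = U * Matrix.diagonal (fun m => ((lam m : ℝ) : ℂ)) * Uᴴ)
    (p : Fin M → ℝ)
    (hp : ∀ m, p m = if lam m = 0 then 0 else max (μ - σ2 / lam m) 0)
    (hμ : ∑ m, p m = P) :
    (∀ T : Matrix (Fin M) (Fin M) ℂ, T.PosSemidef → T.trace.re ≤ P →
      Real.log ((1 + (σ2⁻¹ : ℝ) • (H * T * Hᴴ)).det.re) ≤
        ∑ m, Real.log (1 + lam m * p m / σ2)) ∧
    Real.log ((1 + (σ2⁻¹ : ℝ) •
        (H * (U * Matrix.diagonal (fun m => ((p m : ℝ) : ℂ)) * Uᴴ) * Hᴴ)).det.re) =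
      ∑ m, Real.log (1 + lam m * p m / σ2) := by
  have hc : (0:ℝ) ≤ σ2⁻¹ := by positivity
  set c : ℝ := σ2⁻¹ with hc_def
  set D : Matrix (Fin M) (Fin M) ℂ := Matrix.diagonal (fun m => ((lam m : ℝ) : ℂ)) with hD_def
  set R : Matrix (Fin M) (Fin M) ℂ :=
    Matrix.diagonal (fun m => ((Real.sqrt (lam m) : ℝ) : ℂ)) with hR_def
  have hRR : R * R = D := by
    have hf : (fun m => ((Real.sqrt (lam m) : ℝ) : ℂ) * ((Real.sqrt (lam m) : ℝ) : ℂ))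
        = fun m => ((lam m : ℝ) : ℂ) :=
      funext fun m => by rw [← Complex.ofReal_mul, Real.mul_self_sqrt (hlam m)]
    rw [hR_def, hD_def, Matrix.diagonal_mul_diagonal, hf]
  have hRH : Rᴴ = R := by
    simp [hR_def, Matrix.diagonal_conjTranspose, Function.comp]
  have hUU1 : Uᴴ * U = 1 := by
    have := Matrix.mem_unitaryGroup_iff'.mp hU
    rwa [Matrix.star_eq_conjTranspose] at this
  have hUU2 : U * Uᴴ = 1 := by
    have := Matrix.mem_unitaryGroup_iff.mp hU
    rwa [Matrix.star_eq_conjTranspose] at this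
  have hpnn : ∀ m, 0 ≤ p m := by
    intro m
    rw [hp m]
    split_ifs
    · exact le_refl 0
    · exact le_max_right _ _
  have hμpos : 0 < μ := by
    have hex : ∃ m, 0 < p m := by
      by_contra hcon
      push_neg at hcon
      have : ∑ m, p m ≤ 0 := Finset.sum_nonpos (fun m _ => hcon m)
      rw [hμ] at this
      linarith
    obtain ⟨m0, hm0⟩ := hex
    rw [hp m0] at hm0
    split_ifs at hm0 with h
    · simp at hm0
    · have h1 : 0 < μ - σ2 / lam m0 := by
        rcases lt_max_iff.mp hm0 with h' | h'
        · exact h'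
        · simp at h'
      have hl0 : 0 < lam m0 := lt_of_le_of_ne (hlam m0) (Ne.symm h)
      have : 0 < σ2 / lam m0 := div_pos hσ hl0
      linarith
  have hfac : ∀ m, 0 < 1 + lam m * p m / σ2 := by
    intro m
    have := mul_nonneg (hlam m) (hpnn m)
    positivity
  have hksum : ∀ q : Fin M → ℝ, (∀ m, 0 ≤ q m) → (∑ m, q m) ≤ P →
      ∑ m, Real.log (1 + lam m * q m / σ2) ≤ ∑ m, Real.log (1 + lam m * p m / σ2) := by
    intro q hqnn hqle
    have h9 : (∑ m, q m - ∑ m, p m) / μ ≤ 0 := by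
      apply div_nonpos_of_nonpos_of_nonneg _ hμpos.le
      rw [hμ]
      linarith
    calc ∑ m, Real.log (1 + lam m * q m / σ2)
        ≤ ∑ m, (Real.log (1 + lam m * p m / σ2) + (q m - p m) / μ) :=
          Finset.sum_le_sum (fun m _ =>
            kkt_term σ2 μ (lam m) (q m) (p m) hσ hμpos (hlam m) (hqnn m) (hp m))
      _ = ∑ m, Real.log (1 + lam m * p m / σ2) + (∑ m, q m - ∑ m, p m) / μ := by
          rw [Finset.sum_add_distrib, ← Finset.sum_div, Finset.sum_sub_distrib]
      _ ≤ ∑ m, Real.log (1 + lam m * p m / σ2) := by linarith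
  have chain : ∀ T : Matrix (Fin M) (Fin M) ℂ,
      (1 + c • (H * T * Hᴴ)).det = (1 + c • (D * (Uᴴ * T * U))).det := by
    intro T
    calc (1 + c • (H * T * Hᴴ)).det
        = (1 + c • (H * (T * Hᴴ))).det := by rw [Matrix.mul_assoc]
      _ = (1 + c • ((T * Hᴴ) * H)).det := det_one_add_smul_mul_comm c H (T * Hᴴ)
      _ = (1 + c • (T * (U * D * Uᴴ))).det := by rw [Matrix.mul_assoc, hH]
      _ = (1 + c • ((T * U * D) * Uᴴ)).det := by simp only [← Matrix.mul_assoc]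
      _ = (1 + c • (Uᴴ * (T * U * D))).det := det_one_add_smul_mul_comm c (T * U * D) Uᴴ
      _ = (1 + c • ((Uᴴ * T * U) * D)).det := by simp only [← Matrix.mul_assoc]
      _ = (1 + c • (D * (Uᴴ * T * U))).det := det_one_add_smul_mul_comm c (Uᴴ * T * U) D
  constructor
  · -- the inequality
    intro T hT htr
    set S : Matrix (Fin M) (Fin M) ℂ := Uᴴ * T * U with hS_def
    have hSpsd : S.PosSemidef := hT.conjTranspose_mul_mul_same U
    set q : Fin M → ℝ := fun m => (S m m).re with hq_def
    have hqnn : ∀ m, 0 ≤ q m := fun m => psd_diag_re_nonneg hSpsd m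
    have htrS : S.trace = T.trace := by
      rw [hS_def, Matrix.trace_mul_comm, ← Matrix.mul_assoc, hUU2, one_mul]
    have hqsum : ∑ m, q m ≤ P := by
      have : ∑ m, q m = S.trace.re := by
        rw [Matrix.trace, Complex.re_sum]
        rfl
      rw [this, htrS]
      exact htr
    set W : Matrix (Fin M) (Fin M) ℂ := 1 + c • (R * S * R) with hW_def
    have hQpsd : (R * S * R).PosSemidef := by
      have := hSpsd.mul_mul_conjTranspose_same R
      rwa [hRH] at this
    have hWpd : W.PosDef := Matrix.PosDef.one.add_posSemidef (psd_real_smul hc hQpsd)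
    have hdet : (1 + c • (H * T * Hᴴ)).det = W.det := by
      rw [chain T, ← hS_def, hW_def, ← hRR, Matrix.mul_assoc]
      exact det_one_add_smul_mul_comm c R (R * S)
    have hWdiag : ∀ m, (W m m).re = 1 + lam m * q m / σ2 := by
      intro m
      have h1 : W m m = 1 + c • (((Real.sqrt (lam m) : ℝ) : ℂ) * S m m
          * ((Real.sqrt (lam m) : ℝ) : ℂ)) := by
        rw [hW_def]
        simp only [Matrix.add_apply, Matrix.one_apply_eq, Matrix.smul_apply]
        congr 2
        rw [hR_def, Matrix.mul_diagonal, Matrix.diagonal_mul]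
      have hss : Real.sqrt (lam m) * Real.sqrt (lam m) = lam m := Real.mul_self_sqrt (hlam m)
      have h2 : (W m m).re
          = 1 + c * (Real.sqrt (lam m) * (S m m).re * Real.sqrt (lam m)) := by
        rw [h1]
        simp only [Complex.add_re, Complex.one_re, Complex.real_smul, Complex.mul_re,
          Complex.mul_im, Complex.ofReal_re, Complex.ofReal_im, mul_zero, zero_mul,
          sub_zero, zero_sub, add_zero, zero_add]
      have h3 : Real.sqrt (lam m) * (S m m).re * Real.sqrt (lam m)
          = lam m * (S m m).re := by
        linear_combination (S m m).re * hss
      rw [h2, h3, hq_def, hc_def]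
      rw [div_eq_mul_inv]
      ring
    have hWpos : 0 < W.det.re := by
      have := hWpd.det_pos
      rw [Complex.lt_def] at this
      simpa using this.1
    rw [hdet]
    have hhad := hadamard_det_le hWpd
    have hprod : ∏ m, (W m m).re = ∏ m, (1 + lam m * q m / σ2) :=
      Finset.prod_congr rfl (fun m _ => hWdiag m)
    have hfacq : ∀ m, 0 < 1 + lam m * q m / σ2 := by
      intro m
      have := mul_nonneg (hlam m) (hqnn m)
      positivity
    calc Real.log W.det.re
        ≤ Real.log (∏ m, (1 + lam m * q m / σ2)) := by
          apply Real.log_le_log hWpos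
          rw [← hprod]
          exact hhad
      _ = ∑ m, Real.log (1 + lam m * q m / σ2) :=
          Real.log_prod (fun m _ => (hfacq m).ne')
      _ ≤ ∑ m, Real.log (1 + lam m * p m / σ2) := hksum q hqnn hqsum
  · -- equality at the water-filling solution
    set dgp : Matrix (Fin M) (Fin M) ℂ := Matrix.diagonal (fun m => ((p m : ℝ) : ℂ))
      with hdgp_def
    have h8 : Uᴴ * (U * dgp * Uᴴ) * U = dgp := by
      rw [show Uᴴ * (U * dgp * Uᴴ) * U = (Uᴴ * U) * dgp * (Uᴴ * U) from by
        simp only [Matrix.mul_assoc], hUU1, one_mul, mul_one]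
    have h9 : (1 + c • (H * (U * dgp * Uᴴ) * Hᴴ)).det
        = (1 + c • (D * dgp)).det := by
      rw [chain (U * dgp * Uᴴ), h8]
    have h10 : (1 + c • (D * dgp))
        = Matrix.diagonal (fun m => ((1 + lam m * p m / σ2 : ℝ) : ℂ)) := by
      rw [hD_def, hdgp_def, Matrix.diagonal_mul_diagonal]
      ext i j
      by_cases hij : i = j
      · subst hij
        simp only [Matrix.add_apply, Matrix.one_apply_eq, Matrix.smul_apply,
          Matrix.diagonal_apply_eq, Complex.real_smul]
        push_cast
        rw [Complex.ofReal_inv]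
        ring
      · simp [Matrix.one_apply, Matrix.diagonal_apply, hij]
    have h11 : (1 + c • (D * dgp)).det = ((∏ m, (1 + lam m * p m / σ2) : ℝ) : ℂ) := by
      rw [h10, Matrix.det_diagonal]
      push_cast
      rfl
    rw [h9, h11, Complex.ofReal_re]
    exact Real.log_prod (fun m _ => (hfac m).ne')
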